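/- Switching a non-bridge branch s out of service changes the DC flow on any other branch m by exactly LODF_{m,s} · f_s, and therefore there exist networks and injections for which removing a line strictly decreases the absolute flow on an overloaded monitored line. -/

import Mathlib

/-- The action of the weighted graph Laplacian (DC power flow operator) on angles `θ`:
`(L θ) v = Σ_k B_k (θ_{i(k)} − θ_{j(k)}) ((e_{i(k)} − e_{j(k)}) v)`. -/
def lapOp {N E : ℕ} (ed : Fin E → Fin N × Fin N) (w : Fin E → ℝ) (θ : Fin N → ℝ) :
    Fin N → ℝ := fun v => ∑ k : Fin E, w k * (θ (ed k).1 - θ (ed k).2) *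
      ((if v = (ed k).1 then (1:ℝ) else 0) - (if v = (ed k).2 then (1:ℝ) else 0))

/-- DC flow on branch `k`: `f_k = B_k (θ_i − θ_j)`. -/
def lineFlow {N E : ℕ} (ed : Fin E → Fin N × Fin N) (w : Fin E → ℝ) (θ : Fin N → ℝ)
    (k : Fin E) : ℝ := w k * (θ (ed k).1 - θ (ed k).2)

/-- The network (restricted to branches of nonzero susceptance) is connected. -/
def connectedNet {N E : ℕ} (ed : Fin E → Fin N × Fin N) (w : Fin E → ℝ) : Prop :=
  ∀ u v : Fin N, Relation.ReflTransGen
    (fun a b => ∃ k : Fin E, w k ≠ 0 ∧ (ed k = (a, b) ∨ ed k = (b, a))) u v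

/-- Outage of branch `s`, modelled by zeroing its susceptance. -/
def removeLine {E : ℕ} (w : Fin E → ℝ) (s : Fin E) : Fin E → ℝ :=
  fun k => if k = s then 0 else w k

/-- Incidence vector `e_{i(k)} − e_{j(k)}` of branch `k`. -/
def incVec {N E : ℕ} (ed : Fin E → Fin N × Fin N) (k : Fin E) : Fin N → ℝ :=
  fun v => (if v = (ed k).1 then (1:ℝ) else 0) - (if v = (ed k).2 then (1:ℝ) else 0)

/-- Weighted graph Laplacian matrix `L = Σ_k B_k (e_i − e_j)(e_i − e_j)ᵀ`. -/
def lapM {N E : ℕ} (ed : Fin E → Fin N × Fin N) (w : Fin E → ℝ) :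
    Matrix (Fin N) (Fin N) ℝ :=
  fun u v => ∑ k : Fin E, w k * incVec ed k u * incVec ed k v

/-- `P` is the Moore–Penrose pseudoinverse of `L`. -/
def IsPseudoInv {N : ℕ} (L P : Matrix (Fin N) (Fin N) ℝ) : Prop :=
  L * P * L = L ∧ P * L * P = P ∧ Matrix.transpose (L * P) = L * P ∧ Matrix.transpose (P * L) = P * L

/-- Power transfer distribution factor
`PTDF_{m,k} = B_m (e_{i(m)} − e_{j(m)})ᵀ L⁺ (e_{i(k)} − e_{j(k)})`. -/
def ptdf {N E : ℕ} (ed : Fin E → Fin N × Fin N) (w : Fin E → ℝ)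
    (P : Matrix (Fin N) (Fin N) ℝ) (m k : Fin E) : ℝ :=
  w m * ∑ v : Fin N, incVec ed m v * P.mulVec (incVec ed k) v


section aux
variable {N E : ℕ} (ed : Fin E → Fin N × Fin N) (w : Fin E → ℝ)

lemma dot_inc (g : Fin N → ℝ) (k : Fin E) :
    ∑ v, incVec ed k v * g v = g (ed k).1 - g (ed k).2 := by
  simp [incVec, sub_mul, Finset.sum_sub_distrib, ite_mul]

lemma lapM_mulVec (θ : Fin N → ℝ) :
    (lapM ed w).mulVec θ = lapOp ed w θ := by
  funext u
  simp only [Matrix.mulVec, dotProduct, lapM, lapOp, Finset.sum_mul]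
  rw [Finset.sum_comm]
  refine Finset.sum_congr rfl fun k _ => ?_
  have := dot_inc ed θ k
  calc ∑ v, w k * incVec ed k u * incVec ed k v * θ v
      = w k * incVec ed k u * ∑ v, incVec ed k v * θ v := by
        rw [Finset.mul_sum]; exact Finset.sum_congr rfl fun v _ => by ring
    _ = w k * (θ (ed k).1 - θ (ed k).2) * incVec ed k u := by rw [this]; ring
    _ = _ := by simp [incVec]

lemma ker_edge (hw : ∀ j, 0 < w j) (x : Fin N → ℝ) (hx : lapOp ed w x = 0) (k : Fin E) :
    x (ed k).1 = x (ed k).2 := by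
  have h0 : ∑ v, x v * lapOp ed w x v = 0 := by rw [hx]; simp
  have h2 : ∑ kk : Fin E, w kk * (x (ed kk).1 - x (ed kk).2)^2 = 0 := by
    rw [← h0]
    simp only [lapOp, Finset.mul_sum]
    rw [Finset.sum_comm]
    refine Finset.sum_congr rfl fun kk _ => ?_
    have := dot_inc ed x kk
    symm
    calc ∑ v, x v * (w kk * (x (ed kk).1 - x (ed kk).2) *
          ((if v = (ed kk).1 then (1:ℝ) else 0) - (if v = (ed kk).2 then (1:ℝ) else 0)))
        = w kk * (x (ed kk).1 - x (ed kk).2) * ∑ v, incVec ed kk v * x v := by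
          rw [Finset.mul_sum]; exact Finset.sum_congr rfl fun v _ => by simp [incVec]; ring
      _ = w kk * (x (ed kk).1 - x (ed kk).2)^2 := by rw [this]; ring
  have hterm : ∀ kk ∈ Finset.univ, (0:ℝ) ≤ w kk * (x (ed kk).1 - x (ed kk).2)^2 :=
    fun kk _ => mul_nonneg (hw kk).le (sq_nonneg _)
  have := (Finset.sum_eq_zero_iff_of_nonneg hterm).mp h2 k (Finset.mem_univ k)
  have h3 : (x (ed k).1 - x (ed k).2)^2 = 0 := by
    rcases mul_eq_zero.mp this with h | h
    · exact absurd h (hw k).ne'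
    · exact h
  have := pow_eq_zero_iff (n := 2) (by norm_num) |>.mp h3
  linarith [this]

end aux

section split
variable {N E : ℕ} (ed : Fin E → Fin N × Fin N) (w : Fin E → ℝ)

lemma sum_remove (s : Fin E) (X : Fin E → ℝ) :
    ∑ k, w k * X k = (∑ k, removeLine w s k * X k) + w s * X s := by
  have : ∀ k : Fin E, w k * X k - removeLine w s k * X k
      = if k = s then w s * X s else 0 := by
    intro k
    by_cases h : k = s <;> simp [removeLine, h]
  calc ∑ k, w k * X k
      = ∑ k, (removeLine w s k * X k + (if k = s then w s * X s else 0)) := by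
        refine Finset.sum_congr rfl fun k _ => ?_
        have := this k; linarith [this]
    _ = (∑ k, removeLine w s k * X k) + ∑ k, (if k = s then w s * X s else 0) := by
        rw [Finset.sum_add_distrib]
    _ = (∑ k, removeLine w s k * X k) + w s * X s := by
        simp

lemma lapOp_remove (s : Fin E) (θ : Fin N → ℝ) (v : Fin N) :
    lapOp ed w θ v = lapOp ed (removeLine w s) θ v
      + w s * (θ (ed s).1 - θ (ed s).2) * incVec ed s v := by
  have := sum_remove w s (fun k => (θ (ed k).1 - θ (ed k).2) *
    ((if v = (ed k).1 then (1:ℝ) else 0) - (if v = (ed k).2 then (1:ℝ) else 0)))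
  simp only [lapOp, incVec]
  calc ∑ k, w k * (θ (ed k).1 - θ (ed k).2) *
        ((if v = (ed k).1 then (1:ℝ) else 0) - (if v = (ed k).2 then (1:ℝ) else 0))
      = ∑ k, w k * ((θ (ed k).1 - θ (ed k).2) *
        ((if v = (ed k).1 then (1:ℝ) else 0) - (if v = (ed k).2 then (1:ℝ) else 0))) := by
        exact Finset.sum_congr rfl fun k _ => by ring
    _ = _ := by
        rw [this]
        ring_nf

lemma lapOp_sub (θ₁ θ₂ : Fin N → ℝ) :
    lapOp ed w (fun v => θ₁ v - θ₂ v) = fun v => lapOp ed w θ₁ v - lapOp ed w θ₂ v := by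
  funext v
  simp only [lapOp, ← Finset.sum_sub_distrib]
  exact Finset.sum_congr rfl fun k _ => by ring

end split

lemma part1 {N E : ℕ}
    (ed : Fin E → Fin N × Fin N) (w : Fin E → ℝ)
    (hwpos : ∀ j, 0 < w j)
    (P : Matrix (Fin N) (Fin N) ℝ) (hP : IsPseudoInv (lapM ed w) P)
    (p θ θs : Fin N → ℝ) (m s : Fin E) (hms : m ≠ s)
    (hθ : lapOp ed w θ = p)
    (hθs : lapOp ed (removeLine w s) θs = p)
    (hptdf : ptdf ed w P s s ≠ 1) :
    lineFlow ed (removeLine w s) θs m - lineFlow ed w θ m =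
      (ptdf ed w P m s / (1 - ptdf ed w P s s)) * lineFlow ed w θ s := by
  set c : ℝ := w s * (θs (ed s).1 - θs (ed s).2) with hc
  set x : Fin N → ℝ := fun v => θs v - θ v with hxdef
  have hLx : lapOp ed w x = fun v => c * incVec ed s v := by
    funext v
    have h1 := lapOp_remove ed w s θs v
    have := congrFun (lapOp_sub ed w θs θ) v
    show lapOp ed w x v = _
    rw [hxdef, this, hθ, h1, congrFun hθs v]
    ring
  have hLMx : (lapM ed w).mulVec x = fun v => c * incVec ed s v := by
    rw [lapM_mulVec]; exact hLx
  set y : Fin N → ℝ := P.mulVec (fun v => c * incVec ed s v) with hydef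
  have hLy : (lapM ed w).mulVec y = fun v => c * incVec ed s v := by
    rw [hydef, ← hLMx, Matrix.mulVec_mulVec, Matrix.mulVec_mulVec, hP.1]
  have hz : lapOp ed w (fun v => x v - y v) = 0 := by
    rw [lapOp_sub, hLx]
    funext v
    rw [← lapM_mulVec, hLy]
    simp
  have hedge : ∀ k : Fin E, x (ed k).1 - x (ed k).2 = y (ed k).1 - y (ed k).2 := by
    intro k
    have := ker_edge ed w hwpos (fun v => x v - y v) hz k
    linarith
  have hy : ∀ k : Fin E, y (ed k).1 - y (ed k).2
      = c * ∑ v, incVec ed k v * P.mulVec (incVec ed s) v := by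
    intro k
    have hsmul : y = c • P.mulVec (incVec ed s) := by
      rw [hydef]
      have : (fun v => c * incVec ed s v) = c • incVec ed s := rfl
      rw [this, Matrix.mulVec_smul]
    rw [← dot_inc ed y k, hsmul]
    simp only [Pi.smul_apply, smul_eq_mul, Finset.mul_sum]
    exact Finset.sum_congr rfl fun v _ => by ring
  have key : ∀ k : Fin E, w k * (θs (ed k).1 - θs (ed k).2) - w k * (θ (ed k).1 - θ (ed k).2)
      = c * ptdf ed w P k s := by
    intro k
    have h3 : θs (ed k).1 - θ (ed k).1 - (θs (ed k).2 - θ (ed k).2)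
        = c * ∑ v, incVec ed k v * P.mulVec (incVec ed s) v := by
      have h1 := hedge k
      have h2 := hy k
      have hx1 : x (ed k).1 = θs (ed k).1 - θ (ed k).1 := rfl
      have hx2 : x (ed k).2 = θs (ed k).2 - θ (ed k).2 := rfl
      rw [← hx1, ← hx2, h1, h2]
    rw [ptdf]
    linear_combination (w k) * h3
  have hcs : c - lineFlow ed w θ s = c * ptdf ed w P s s := by
    rw [hc, lineFlow]; exact key s
  have hsub : (1 : ℝ) - ptdf ed w P s s ≠ 0 := sub_ne_zero.mpr (Ne.symm hptdf)
  have hfin : c * (1 - ptdf ed w P s s) = lineFlow ed w θ s := by linear_combination hcs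
  have hflow : lineFlow ed (removeLine w s) θs m = w m * (θs (ed m).1 - θs (ed m).2) := by
    simp [lineFlow, removeLine, hms]
  rw [hflow]
  calc w m * (θs (ed m).1 - θs (ed m).2) - lineFlow ed w θ m = c * ptdf ed w P m s := by
        rw [lineFlow]; exact key m
    _ = ptdf ed w P m s / (1 - ptdf ed w P s s) * lineFlow ed w θ s := by
        rw [← hfin]; field_simp

namespace CTSExample

noncomputable def ed3 : Fin 3 → Fin 3 × Fin 3 := ![(0,1), (1,2), (0,2)]
noncomputable def w3 : Fin 3 → ℝ := fun _ => 1
noncomputable def p3 : Fin 3 → ℝ := ![0, 1, -1]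
noncomputable def th3 : Fin 3 → ℝ := ![0, 1/3, -1/3]
noncomputable def ths3 : Fin 3 → ℝ := ![0, 1, 0]

lemma conn_removed : connectedNet ed3 (removeLine w3 0) := by
  intro u v
  set r := fun a b : Fin 3 => ∃ k : Fin 3, removeLine w3 0 k ≠ 0 ∧ (ed3 k = (a, b) ∨ ed3 k = (b, a))
  have e1 : r 1 2 := ⟨1, by simp [removeLine, w3], Or.inl (by norm_num [ed3])⟩
  have e1' : r 2 1 := ⟨1, by simp [removeLine, w3], Or.inr (by norm_num [ed3])⟩
  have e2 : r 0 2 := ⟨2, by simp [removeLine, w3], Or.inl (by norm_num [ed3]; rfl)⟩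
  have e2' : r 2 0 := ⟨2, by simp [removeLine, w3], Or.inr (by norm_num [ed3]; rfl)⟩
  fin_cases u <;> fin_cases v
  · exact .refl
  · exact .tail (.single e2) e1'
  · exact .single e2
  · exact .tail (.single e1) e2'
  · exact .refl
  · exact .single e1
  · exact .single e2'
  · exact .single e1'
  · exact .refl

lemma conn_full : connectedNet ed3 w3 := by
  intro u v
  refine Relation.ReflTransGen.mono ?_ u v (conn_removed u v)
  rintro a b ⟨k, hk, h⟩
  refine ⟨k, ?_, h⟩
  simp only [removeLine] at hk
  by_cases hk0 : k = 0
  · simp [hk0] at hk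
  · simp [hk0] at hk; exact hk

lemma hbal3 : (∑ v, p3 v) = 0 := by
  simp [p3, Fin.sum_univ_three]

lemma hth3 : lapOp ed3 w3 th3 = p3 := by
  funext v
  fin_cases v <;>
    simp [lapOp, ed3, w3, th3, p3, Fin.sum_univ_three] <;> norm_num

lemma hths3 : lapOp ed3 (removeLine w3 0) ths3 = p3 := by
  funext v
  fin_cases v <;>
    simp [lapOp, ed3, w3, ths3, p3, removeLine, Fin.sum_univ_three] <;> norm_num

lemma flows : lineFlow ed3 w3 th3 2 = 1/3 ∧ lineFlow ed3 (removeLine w3 0) ths3 2 = 0 := by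
  constructor <;> norm_num [lineFlow, ed3, w3, th3, ths3, removeLine, Matrix.cons_val_two, Matrix.vecHead, Matrix.vecTail]

end CTSExample

/-- Switching out a non-bridge branch `s` changes the DC flow on any other
branch `m` by exactly `LODF_{m,s} f_s`; and there exist networks and injections for which
removing a line strictly decreases the absolute flow on an overloaded monitored line. -/
theorem switching_flow_change_and_relief_exists {N E : ℕ}
    (ed : Fin E → Fin N × Fin N) (w : Fin E → ℝ)
    (hwpos : ∀ j, 0 < w j) (hconn : connectedNet ed w)
    (P : Matrix (Fin N) (Fin N) ℝ) (hP : IsPseudoInv (lapM ed w) P)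
    (p θ θs : Fin N → ℝ) (m s : Fin E) (hms : m ≠ s)
    (hbal : (∑ v, p v) = 0)
    (hθ : lapOp ed w θ = p)
    (hnotbridge : connectedNet ed (removeLine w s))
    (hθs : lapOp ed (removeLine w s) θs = p)
    (hptdf : ptdf ed w P s s ≠ 1) :
    (lineFlow ed (removeLine w s) θs m - lineFlow ed w θ m =
      (ptdf ed w P m s / (1 - ptdf ed w P s s)) * lineFlow ed w θ s) ∧
    (∃ (N' E' : ℕ) (ed' : Fin E' → Fin N' × Fin N') (w' : Fin E' → ℝ)
        (p' θ' θ's : Fin N' → ℝ) (R : ℝ) (m' s' : Fin E'),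
      (∀ j, 0 < w' j) ∧ connectedNet ed' w' ∧ (∑ v, p' v) = 0 ∧
      lapOp ed' w' θ' = p' ∧ connectedNet ed' (removeLine w' s') ∧
      lapOp ed' (removeLine w' s') θ's = p' ∧
      R < |lineFlow ed' w' θ' m'| ∧
      |lineFlow ed' (removeLine w' s') θ's m'| < |lineFlow ed' w' θ' m'|) := by

  constructor
  · exact part1 ed w hwpos P hP p θ θs m s hms hθ hθs hptdf
  · refine ⟨3, 3, CTSExample.ed3, CTSExample.w3, CTSExample.p3, CTSExample.th3,
      CTSExample.ths3, 1/4, 2, 0, fun j => by norm_num [CTSExample.w3],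
      CTSExample.conn_full, CTSExample.hbal3, CTSExample.hth3, CTSExample.conn_removed,
      CTSExample.hths3, ?_, ?_⟩
    · rw [CTSExample.flows.1]; rw [abs_of_pos (by norm_num)]; norm_num
    · rw [CTSExample.flows.1, CTSExample.flows.2, abs_of_pos (by norm_num : (0:ℝ) < 1/3)]; norm_num
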